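/- Assume x_c = 0, y_c = 0 and 2r ≤ a². Then 𝒮 is interior to 𝒫 if and only if z_c > r, and 𝒮 is exterior to 𝒫 if and only if z_c < −r. -/

import Mathlib

open Matrix Polynomial

/-- The 4×4 matrix of the elliptic paraboloid x²/a² + y²/b² - z = 0. -/
noncomputable def Pmat (a b : ℝ) : Matrix (Fin 4) (Fin 4) ℝ :=
  !![1/a^2, 0, 0, 0;
     0, 1/b^2, 0, 0;
     0, 0, 0, -(1/2 : ℝ);
     0, 0, -(1/2 : ℝ), 0]

/-- The 4×4 matrix of the sphere (x-x_c)² + (y-y_c)² + (z-z_c)² = r². -/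
noncomputable def Smat (xc yc zc r : ℝ) : Matrix (Fin 4) (Fin 4) ℝ :=
  !![1, 0, 0, -xc;
     0, 1, 0, -yc;
     0, 0, 1, -zc;
     -xc, -yc, -zc, xc^2 + yc^2 + zc^2 - r^2]

/-- The point (x,y,z) lies on the elliptic paraboloid x²/a² + y²/b² - z = 0. -/
def onParaboloid (a b x y z : ℝ) : Prop := x^2/a^2 + y^2/b^2 - z = 0

/-- The point (x,y,z) lies on the sphere of radius r centered at (x_c,y_c,z_c). -/
def onSphere (xc yc zc r x y z : ℝ) : Prop :=
  (x - xc)^2 + (y - yc)^2 + (z - zc)^2 = r^2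

/-- for a sphere centered on the OZ-axis under the smallness
condition 2r ≤ a², the sphere is interior to the paraboloid iff z_c > r and
exterior iff z_c < -r. -/
theorem interior_exterior_iff_center_on_axis (a b r zc : ℝ)
    (ha : 0 < a) (hab : a ≤ b) (hr : 0 < r) (hsmall : 2*r ≤ a^2) :
    ((∀ x y z : ℝ, onSphere 0 0 zc r x y z → x^2/a^2 + y^2/b^2 - z < 0) ↔ r < zc) ∧
    ((∀ x y z : ℝ, onSphere 0 0 zc r x y z → 0 < x^2/a^2 + y^2/b^2 - z) ↔ zc < -r) := by
  have hb : 0 < b := lt_of_lt_of_le ha hab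
  have ha2 : (0:ℝ) < a^2 := by positivity
  have hb2 : (0:ℝ) < b^2 := by positivity
  have hab2 : a^2 ≤ b^2 := by nlinarith
  constructor
  · constructor
    · intro h
      have := h 0 0 (zc - r) (by simp [onSphere])
      simp at this
      linarith
    · intro hzc x y z hs
      unfold onSphere at hs
      simp only [sub_zero] at hs
      have h1 : (z - zc)^2 ≤ r^2 := by nlinarith [sq_nonneg x, sq_nonneg y]
      have h2 : -r ≤ z - zc := by nlinarith [sq_nonneg (z - zc + r)]
      have hy : y^2/b^2 ≤ y^2/a^2 := by
        apply div_le_div_of_nonneg_left (sq_nonneg y) ha2 hab2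
      have key : x^2 + y^2 < z * a^2 := by
        nlinarith [mul_nonneg (by linarith : (0:ℝ) ≤ z - zc + r)
          (by linarith : (0:ℝ) ≤ a^2 + z - zc - r)]
      have : x^2/a^2 + y^2/a^2 < z := by
        rw [← add_div, div_lt_iff₀ ha2]
        linarith
      linarith
  · constructor
    · intro h
      have := h 0 0 (zc + r) (by simp [onSphere])
      simp at this
      linarith
    · intro hzc x y z hs
      unfold onSphere at hs
      simp only [sub_zero] at hs
      have h1 : (z - zc)^2 ≤ r^2 := by nlinarith [sq_nonneg x, sq_nonneg y]
      have h2 : z - zc ≤ r := by nlinarith [sq_nonneg (z - zc - r)]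
      have hx : (0:ℝ) ≤ x^2/a^2 := by positivity
      have hy : (0:ℝ) ≤ y^2/b^2 := by positivity
      linarith
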